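/- Let Ȧ₁ and Ȧ₂ be densely defined closed symmetric operators with deficiency indices (1,1) on complex Hilbert spaces H₁ and H₂, let g±ᵏ ∈ ker((Ȧₖ)* ∓ i) be unit vectors, k = 1,2, let α, β ∈ [0, π), and let Ȧ be the restriction of (Ȧ₁ ⊕ Ȧ₂)* to Dom(Ȧ₁) ⊕ Dom(Ȧ₂) ∔ span{(sin α g₊¹ − sin β g₋¹) ⊕ (cos α g₊² − cos β g₋²)}. Then Ȧ is a symmetric operator with deficiency indices (1,1), its deficiency subspaces are ker(Ȧ* − i) = span{G₊} and ker(Ȧ* + i) = span{G₋}, where G₊ = cos α g₊¹ − sin α g₊² and G₋ = cos β g₋¹ − sin β g₋², and ‖G₊‖ = ‖G₋‖ = 1. -/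

import Mathlib

noncomputable section

open Complex

/-- The inner product, linear in the **first** argument (the convention of the paper). -/
def ip {H : Type*} [NormedAddCommGroup H] [InnerProductSpace ℂ H] (x y : H) : ℂ :=
  @inner ℂ H _ y x

variable {H H₁ H₂ : Type*}
  [NormedAddCommGroup H] [InnerProductSpace ℂ H] [CompleteSpace H]
  [NormedAddCommGroup H₁] [InnerProductSpace ℂ H₁] [CompleteSpace H₁]
  [NormedAddCommGroup H₂] [InnerProductSpace ℂ H₂] [CompleteSpace H₂]

/-- The deficiency subspace `ker (T* - z)` of a densely defined operator `T`,
as a subset of the ambient space. -/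
def defSet (T : H →ₗ.[ℂ] H) (z : ℂ) : Set H :=
  {g | ∃ hg : g ∈ T.adjoint.domain, T.adjoint ⟨g, hg⟩ = z • g}

/-- `g` is a nonzero vector spanning the deficiency subspace `ker (T* - z)`. -/
def SpansDefSet (T : H →ₗ.[ℂ] H) (z : ℂ) (g : H) : Prop :=
  g ≠ 0 ∧ defSet T z = {h | ∃ c : ℂ, h = c • g}

/-- `T` has deficiency indices `(1,1)`. -/
def HasDefIndicesOneOne (T : H →ₗ.[ℂ] H) : Prop :=
  (∃ g, SpansDefSet T I g) ∧ (∃ g, SpansDefSet T (-I) g)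

/-- A partially defined operator is symmetric. -/
def IsSymmetricOp (T : H →ₗ.[ℂ] H) : Prop :=
  ∀ x y : T.domain, ip (T x) (y : H) = ip (x : H) (T y)

/-- A partially defined operator is self-adjoint. -/
def IsSelfAdjointOp (T : H →ₗ.[ℂ] H) : Prop :=
  Dense (T.domain : Set H) ∧ T.adjoint = T

/-- A partially defined operator is dissipative: `Im ⟨T x, x⟩ ≥ 0`. -/
def IsDissipativeOp (T : H →ₗ.[ℂ] H) : Prop :=
  ∀ x : T.domain, 0 ≤ (ip (T x) (x : H)).im

/-- A partially defined operator is maximal dissipative: it is dissipative and admits no proper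
dissipative extension. -/
def IsMaximalDissipativeOp (T : H →ₗ.[ℂ] H) : Prop :=
  IsDissipativeOp T ∧ ∀ S : H →ₗ.[ℂ] H, IsDissipativeOp S → T ≤ S → S = T

/-- The domain of the direct (orthogonal) sum of two partially defined operators. -/
def prodDomain (T₁ : H₁ →ₗ.[ℂ] H₁) (T₂ : H₂ →ₗ.[ℂ] H₂) :
    Submodule ℂ (WithLp 2 (H₁ × H₂)) where
  carrier := {x | x.fst ∈ T₁.domain ∧ x.snd ∈ T₂.domain}
  add_mem' := fun ha hb => ⟨Submodule.add_mem _ ha.1 hb.1, Submodule.add_mem _ ha.2 hb.2⟩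
  zero_mem' := ⟨Submodule.zero_mem _, Submodule.zero_mem _⟩
  smul_mem' := fun c x hx => ⟨Submodule.smul_mem _ c hx.1, Submodule.smul_mem _ c hx.2⟩

/-- First-component projection of the domain of a direct sum. -/
def fstD (T₁ : H₁ →ₗ.[ℂ] H₁) (T₂ : H₂ →ₗ.[ℂ] H₂) :
    ↥(prodDomain T₁ T₂) →ₗ[ℂ] T₁.domain where
  toFun x := ⟨x.val.fst, x.prop.1⟩
  map_add' _ _ := rfl
  map_smul' _ _ := rfl

/-- Second-component projection of the domain of a direct sum. -/
def sndD (T₁ : H₁ →ₗ.[ℂ] H₁) (T₂ : H₂ →ₗ.[ℂ] H₂) :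
    ↥(prodDomain T₁ T₂) →ₗ[ℂ] T₂.domain where
  toFun x := ⟨x.val.snd, x.prop.2⟩
  map_add' _ _ := rfl
  map_smul' _ _ := rfl

/-- The direct (orthogonal) sum `T₁ ⊕ T₂` of two partially defined operators, acting
componentwise on `Dom T₁ ⊕ Dom T₂ ⊆ H₁ ⊕ H₂`. -/
def prodOp (T₁ : H₁ →ₗ.[ℂ] H₁) (T₂ : H₂ →ₗ.[ℂ] H₂) :
    WithLp 2 (H₁ × H₂) →ₗ.[ℂ] WithLp 2 (H₁ × H₂) where
  domain := prodDomain T₁ T₂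
  toFun := (WithLp.linearEquiv 2 ℂ (H₁ × H₂)).symm.toLinearMap ∘ₗ
    ((T₁.toFun ∘ₗ fstD T₁ T₂).prod (T₂.toFun ∘ₗ sndD T₁ T₂))

/-- The canonical embedding of `H₁` into `H₁ ⊕ H₂`. -/
def embFst (x : H₁) : WithLp 2 (H₁ × H₂) := (WithLp.equiv 2 (H₁ × H₂)).symm (x, 0)

/-- Builds an element of `H₁ ⊕ H₂` from components. -/
def pairL2 (x : H₁) (y : H₂) : WithLp 2 (H₁ × H₂) := (WithLp.equiv 2 (H₁ × H₂)).symm (x, y)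

section AuxLemmas

local notation "⟪" x ", " y "⟫" => @inner ℂ _ _ x y

theorem adj_char {T : H →ₗ.[ℂ] H} (hT : Dense (T.domain : Set H)) (y w : H) :
    (∃ hy : y ∈ T.adjoint.domain, T.adjoint ⟨y, hy⟩ = w) ↔
      ∀ x : T.domain, ⟪w, (x : H)⟫ = ⟪y, T x⟫ := by
  constructor
  · rintro ⟨hy, hw⟩ x
    rw [← hw]
    exact LinearPMap.adjoint_isFormalAdjoint hT ⟨y, hy⟩ x
  · intro h
    have hy : y ∈ T.adjoint.domain :=
      LinearPMap.mem_adjoint_domain_of_exists _ ⟨w, h⟩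
    exact ⟨hy, LinearPMap.adjoint_apply_eq hT _ h⟩

theorem mem_defSet_iff {T : H →ₗ.[ℂ] H} (hT : Dense (T.domain : Set H)) (z : ℂ) (g : H) :
    g ∈ defSet T z ↔ ∀ x : T.domain, ⟪z • g, (x : H)⟫ = ⟪g, T x⟫ :=
  adj_char hT g (z • g)

theorem spans_shift {T : H →ₗ.[ℂ] H} {z : ℂ} {g h : H} (hs : SpansDefSet T z g)
    (hh : h ∈ defSet T z) (hh0 : h ≠ 0) :
    defSet T z = {x | ∃ c : ℂ, x = c • h} := by
  have hc : h ∈ {x : H | ∃ c : ℂ, x = c • g} := hs.2 ▸ hh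
  obtain ⟨c₀, hc₀⟩ := hc
  have hc₀0 : c₀ ≠ 0 := by
    rintro rfl
    rw [zero_smul] at hc₀
    exact hh0 hc₀
  rw [hs.2]
  ext x
  simp only [Set.mem_setOf_eq]
  constructor
  · rintro ⟨c, rfl⟩
    exact ⟨c / c₀, by rw [hc₀, smul_smul, div_mul_cancel₀ _ hc₀0]⟩
  · rintro ⟨c, rfl⟩
    exact ⟨c * c₀, by rw [hc₀, smul_smul]⟩

end AuxLemmas

set_option maxHeartbeats 1000000
set_option linter.unusedVariables false
set_option linter.unusedSectionVars false

section ProdLemmas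

local notation "⟪" x ", " y "⟫" => @inner ℂ _ _ x y

variable {B₁ : H₁ →ₗ.[ℂ] H₁} {B₂ : H₂ →ₗ.[ℂ] H₂}

theorem prod_inner_apply' (x y : WithLp 2 (H₁ × H₂)) :
    ⟪x, y⟫ = ⟪x.fst, y.fst⟫ + ⟪x.snd, y.snd⟫ :=
  WithLp.prod_inner_apply x y

theorem prodOp_fst' (x : (prodOp B₁ B₂).domain) :
    (prodOp B₁ B₂ x).fst = B₁ ⟨(x : WithLp 2 (H₁ × H₂)).fst, x.2.1⟩ := rfl

theorem prodOp_snd' (x : (prodOp B₁ B₂).domain) :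
    (prodOp B₁ B₂ x).snd = B₂ ⟨(x : WithLp 2 (H₁ × H₂)).snd, x.2.2⟩ := rfl

theorem dense_prodDomain (hd₁ : Dense (B₁.domain : Set H₁))
    (hd₂ : Dense (B₂.domain : Set H₂)) :
    Dense ((prodDomain B₁ B₂ : Submodule ℂ (WithLp 2 (H₁ × H₂))) : Set (WithLp 2 (H₁ × H₂))) := by
  have h2 := ((WithLp.prodContinuousLinearEquiv 2 ℂ H₁ H₂).symm.toHomeomorph).isDenseEmbedding.dense_image.mpr
    (hd₁.prod hd₂)
  convert h2 using 1
  ext x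
  constructor
  · rintro ⟨h1x, h2x⟩
    exact ⟨(x.fst, x.snd), ⟨h1x, h2x⟩, rfl⟩
  · rintro ⟨y, hy, rfl⟩
    exact ⟨hy.1, hy.2⟩

theorem prodOp_isFormalAdjoint (hs₁ : IsSymmetricOp B₁) (hs₂ : IsSymmetricOp B₂) :
    (prodOp B₁ B₂).IsFormalAdjoint (prodOp B₁ B₂) := by
  intro x y
  rw [prod_inner_apply', prod_inner_apply', prodOp_fst', prodOp_snd',
    prodOp_fst', prodOp_snd']
  have h1 := (hs₁ ⟨(y : WithLp 2 (H₁ × H₂)).fst, y.2.1⟩ ⟨(x : WithLp 2 (H₁ × H₂)).fst, x.2.1⟩).symm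
  have h2 := (hs₂ ⟨(y : WithLp 2 (H₁ × H₂)).snd, y.2.2⟩ ⟨(x : WithLp 2 (H₁ × H₂)).snd, x.2.2⟩).symm
  unfold ip at h1 h2
  rw [h1, h2]

theorem prodOp_adj_iff (hd₁ : Dense (B₁.domain : Set H₁))
    (hd₂ : Dense (B₂.domain : Set H₂)) (y w : WithLp 2 (H₁ × H₂)) :
    (∃ hy : y ∈ (prodOp B₁ B₂).adjoint.domain, (prodOp B₁ B₂).adjoint ⟨y, hy⟩ = w) ↔
      (∃ h1 : y.fst ∈ B₁.adjoint.domain, B₁.adjoint ⟨y.fst, h1⟩ = w.fst) ∧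
      (∃ h2 : y.snd ∈ B₂.adjoint.domain, B₂.adjoint ⟨y.snd, h2⟩ = w.snd) := by
  rw [adj_char (dense_prodDomain hd₁ hd₂) y w, adj_char hd₁, adj_char hd₂]
  constructor
  · intro h
    constructor
    · intro x₁
      have hX : ((WithLp.equiv 2 (H₁ × H₂)).symm ((x₁ : H₁), (0 : H₂))) ∈ prodDomain B₁ B₂ :=
        ⟨x₁.2, Submodule.zero_mem _⟩
      have hval : prodOp B₁ B₂ ⟨(WithLp.equiv 2 (H₁ × H₂)).symm ((x₁ : H₁), (0 : H₂)), hX⟩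
          = (WithLp.equiv 2 (H₁ × H₂)).symm (B₁ x₁, B₂ 0) := rfl
      have hthis := h ⟨_, hX⟩
      rw [hval, prod_inner_apply', prod_inner_apply'] at hthis
      simp only [WithLp.equiv_symm_apply, WithLp.toLp_fst, WithLp.toLp_snd, map_zero, LinearPMap.map_zero,
        inner_zero_right, add_zero] at hthis
      exact hthis
    · intro x₂
      have hX : ((WithLp.equiv 2 (H₁ × H₂)).symm ((0 : H₁), (x₂ : H₂))) ∈ prodDomain B₁ B₂ :=
        ⟨Submodule.zero_mem _, x₂.2⟩
      have hval : prodOp B₁ B₂ ⟨(WithLp.equiv 2 (H₁ × H₂)).symm ((0 : H₁), (x₂ : H₂)), hX⟩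
          = (WithLp.equiv 2 (H₁ × H₂)).symm (B₁ 0, B₂ x₂) := rfl
      have hthis := h ⟨_, hX⟩
      rw [hval, prod_inner_apply', prod_inner_apply'] at hthis
      simp only [WithLp.equiv_symm_apply, WithLp.toLp_fst, WithLp.toLp_snd, map_zero, LinearPMap.map_zero,
        inner_zero_right, zero_add] at hthis
      exact hthis
  · rintro ⟨h1, h2⟩ x
    rw [prod_inner_apply', prod_inner_apply', prodOp_fst', prodOp_snd',
      h1 ⟨_, x.2.1⟩, h2 ⟨_, x.2.2⟩]

theorem mem_defSet_prod (hd₁ : Dense (B₁.domain : Set H₁))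
    (hd₂ : Dense (B₂.domain : Set H₂)) (z : ℂ) (g : WithLp 2 (H₁ × H₂)) :
    g ∈ defSet (prodOp B₁ B₂) z ↔ g.fst ∈ defSet B₁ z ∧ g.snd ∈ defSet B₂ z :=
  prodOp_adj_iff hd₁ hd₂ g (z • g)

end ProdLemmas

section Main

local notation "⟪" x ", " y "⟫" => @inner ℂ _ _ x y

set_option maxHeartbeats 10000000 in
/-- The restriction `Ȧ` of `(Ȧ₁ ⊕ Ȧ₂)*` to
`Dom(Ȧ₁) ⊕ Dom(Ȧ₂) ∔ span{(sin α g₊¹ − sin β g₋¹) ⊕ (cos α g₊² − cos β g₋²)}` is a symmetric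
operator with deficiency indices `(1,1)`, its deficiency subspaces are spanned by
`G₊ = cos α g₊¹ − sin α g₊²` and `G₋ = cos β g₋¹ − sin β g₋²`, and `‖G₊‖ = ‖G₋‖ = 1`. -/
theorem statement1
    (B₁ : H₁ →ₗ.[ℂ] H₁) (B₂ : H₂ →ₗ.[ℂ] H₂)
    (hd₁ : Dense (B₁.domain : Set H₁)) (hd₂ : Dense (B₂.domain : Set H₂))
    (hc₁ : B₁.IsClosed) (hc₂ : B₂.IsClosed)
    (hs₁ : IsSymmetricOp B₁) (hs₂ : IsSymmetricOp B₂)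
    (hi₁ : HasDefIndicesOneOne B₁) (hi₂ : HasDefIndicesOneOne B₂)
    (gp₁ gm₁ : H₁) (gp₂ gm₂ : H₂)
    (hgp₁ : gp₁ ∈ defSet B₁ Complex.I) (hgm₁ : gm₁ ∈ defSet B₁ (-Complex.I))
    (hgp₂ : gp₂ ∈ defSet B₂ Complex.I) (hgm₂ : gm₂ ∈ defSet B₂ (-Complex.I))
    (hnp₁ : ‖gp₁‖ = 1) (hnm₁ : ‖gm₁‖ = 1) (hnp₂ : ‖gp₂‖ = 1) (hnm₂ : ‖gm₂‖ = 1)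
    (α β : ℝ) (hα : α ∈ Set.Ico 0 Real.pi) (hβ : β ∈ Set.Ico 0 Real.pi)
    (f : WithLp 2 (H₁ × H₂))
    (hf : f = pairL2 ((Real.sin α : ℂ) • gp₁ - (Real.sin β : ℂ) • gm₁)
      ((Real.cos α : ℂ) • gp₂ - (Real.cos β : ℂ) • gm₂))
    (A : WithLp 2 (H₁ × H₂) →ₗ.[ℂ] WithLp 2 (H₁ × H₂))
    (hA : A = ((prodOp B₁ B₂).adjoint).domRestrict
      (prodDomain B₁ B₂ ⊔ Submodule.span ℂ {f}))
    (Gp Gm : WithLp 2 (H₁ × H₂))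
    (hGp : Gp = pairL2 ((Real.cos α : ℂ) • gp₁) (-(Real.sin α : ℂ) • gp₂))
    (hGm : Gm = pairL2 ((Real.cos β : ℂ) • gm₁) (-(Real.sin β : ℂ) • gm₂)) :
    IsSymmetricOp A ∧ HasDefIndicesOneOne A ∧
      defSet A Complex.I = {h | ∃ c : ℂ, h = c • Gp} ∧
      defSet A (-Complex.I) = {h | ∃ c : ℂ, h = c • Gm} ∧
      ‖Gp‖ = 1 ∧ ‖Gm‖ = 1 := by
  -- scalar facts
  have hpyα : (Real.sin α : ℂ) ^ 2 + (Real.cos α : ℂ) ^ 2 = 1 := by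
    norm_cast; exact Real.sin_sq_add_cos_sq α
  have hpyβ : (Real.sin β : ℂ) ^ 2 + (Real.cos β : ℂ) ^ 2 = 1 := by
    norm_cast; exact Real.sin_sq_add_cos_sq β
  -- unit inner products
  have hip1 : ⟪gp₁, gp₁⟫ = 1 := by rw [inner_self_eq_norm_sq_to_K, hnp₁]; norm_num
  have hip2 : ⟪gp₂, gp₂⟫ = 1 := by rw [inner_self_eq_norm_sq_to_K, hnp₂]; norm_num
  have hipm1 : ⟪gm₁, gm₁⟫ = 1 := by rw [inner_self_eq_norm_sq_to_K, hnm₁]; norm_num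
  have hipm2 : ⟪gm₂, gm₂⟫ = 1 := by rw [inner_self_eq_norm_sq_to_K, hnm₂]; norm_num
  -- basic operator facts
  have hTd := dense_prodDomain hd₁ hd₂
  have hTfa := prodOp_isFormalAdjoint hs₁ hs₂
  have hTle : prodOp B₁ B₂ ≤ (prodOp B₁ B₂).adjoint := hTfa.le_adjoint hTd
  -- the deficiency subspaces of the components
  have hgp₁0 : gp₁ ≠ 0 := fun h => by rw [h, norm_zero] at hnp₁; exact zero_ne_one hnp₁
  have hgp₂0 : gp₂ ≠ 0 := fun h => by rw [h, norm_zero] at hnp₂; exact zero_ne_one hnp₂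
  have hgm₁0 : gm₁ ≠ 0 := fun h => by rw [h, norm_zero] at hnm₁; exact zero_ne_one hnm₁
  have hgm₂0 : gm₂ ≠ 0 := fun h => by rw [h, norm_zero] at hnm₂; exact zero_ne_one hnm₂
  obtain ⟨s₁, hsp₁⟩ := hi₁.1
  obtain ⟨s₁', hsp₁'⟩ := hi₁.2
  obtain ⟨s₂, hsp₂⟩ := hi₂.1
  obtain ⟨s₂', hsp₂'⟩ := hi₂.2
  have hS₁ : defSet B₁ Complex.I = {x | ∃ c : ℂ, x = c • gp₁} := spans_shift hsp₁ hgp₁ hgp₁0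
  have hS₁' : defSet B₁ (-Complex.I) = {x | ∃ c : ℂ, x = c • gm₁} := spans_shift hsp₁' hgm₁ hgm₁0
  have hS₂ : defSet B₂ Complex.I = {x | ∃ c : ℂ, x = c • gp₂} := spans_shift hsp₂ hgp₂ hgp₂0
  have hS₂' : defSet B₂ (-Complex.I) = {x | ∃ c : ℂ, x = c • gm₂} := spans_shift hsp₂' hgm₂ hgm₂0
  -- adjoint values on the deficiency vectors
  obtain ⟨hgp₁d, hgp₁v⟩ := hgp₁
  obtain ⟨hgm₁d, hgm₁v⟩ := hgm₁
  obtain ⟨hgp₂d, hgp₂v⟩ := hgp₂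
  obtain ⟨hgm₂d, hgm₂v⟩ := hgm₂
  -- the vectors f₊, f₋ and F' = T† f
  set fp : WithLp 2 (H₁ × H₂) :=
    pairL2 ((Real.sin α : ℂ) • gp₁) ((Real.cos α : ℂ) • gp₂) with hfp
  set fm : WithLp 2 (H₁ × H₂) :=
    pairL2 ((Real.sin β : ℂ) • gm₁) ((Real.cos β : ℂ) • gm₂) with hfm
  set Fv : WithLp 2 (H₁ × H₂) := Complex.I • fp + Complex.I • fm with hFv
  have hfp1 : fp.fst = (Real.sin α : ℂ) • gp₁ := rfl
  have hfp2 : fp.snd = (Real.cos α : ℂ) • gp₂ := rfl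
  have hfm1 : fm.fst = (Real.sin β : ℂ) • gm₁ := rfl
  have hfm2 : fm.snd = (Real.cos β : ℂ) • gm₂ := rfl
  have hffpm : f = fp - fm := by rw [hf]; rfl
  -- Gp, Gm components
  have hGp1 : Gp.fst = (Real.cos α : ℂ) • gp₁ := by rw [hGp]; rfl
  have hGp2 : Gp.snd = -(Real.sin α : ℂ) • gp₂ := by rw [hGp]; rfl
  have hGm1 : Gm.fst = (Real.cos β : ℂ) • gm₁ := by rw [hGm]; rfl
  have hGm2 : Gm.snd = -(Real.sin β : ℂ) • gm₂ := by rw [hGm]; rfl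
  -- f is in the domain of T† with value Fv
  have hfc1 : f.fst = (Real.sin α : ℂ) • gp₁ - (Real.sin β : ℂ) • gm₁ := by rw [hf]; rfl
  have hfc2 : f.snd = (Real.cos α : ℂ) • gp₂ - (Real.cos β : ℂ) • gm₂ := by rw [hf]; rfl
  have hf1d : f.fst ∈ B₁.adjoint.domain := by
    rw [hfc1]
    exact sub_mem (Submodule.smul_mem _ _ hgp₁d) (Submodule.smul_mem _ _ hgm₁d)
  have hf2d : f.snd ∈ B₂.adjoint.domain := by
    rw [hfc2]
    exact sub_mem (Submodule.smul_mem _ _ hgp₂d) (Submodule.smul_mem _ _ hgm₂d)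
  have hfv' : ∃ hfd : f ∈ (prodOp B₁ B₂).adjoint.domain,
      (prodOp B₁ B₂).adjoint ⟨f, hfd⟩ = Fv := by
    rw [prodOp_adj_iff hd₁ hd₂]
    constructor
    · refine ⟨hf1d, ?_⟩
      have he : (⟨f.fst, hf1d⟩ : B₁.adjoint.domain)
          = (Real.sin α : ℂ) • ⟨gp₁, hgp₁d⟩ - (Real.sin β : ℂ) • ⟨gm₁, hgm₁d⟩ := by
        ext; exact hfc1
      rw [he, LinearPMap.map_sub, LinearPMap.map_smul, LinearPMap.map_smul, hgp₁v, hgm₁v]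
      show _ = Complex.I • ((Real.sin α : ℂ) • gp₁) + Complex.I • ((Real.sin β : ℂ) • gm₁)
      module
    · refine ⟨hf2d, ?_⟩
      have he : (⟨f.snd, hf2d⟩ : B₂.adjoint.domain)
          = (Real.cos α : ℂ) • ⟨gp₂, hgp₂d⟩ - (Real.cos β : ℂ) • ⟨gm₂, hgm₂d⟩ := by
        ext; exact hfc2
      rw [he, LinearPMap.map_sub, LinearPMap.map_smul, LinearPMap.map_smul, hgp₂v, hgm₂v]
      show _ = Complex.I • ((Real.cos α : ℂ) • gp₂) + Complex.I • ((Real.cos β : ℂ) • gm₂)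
      module
  obtain ⟨hfd, hfv⟩ := hfv'
  -- domain facts for A
  have hDsub : ∀ u : (prodOp B₁ B₂).domain, (u : WithLp 2 (H₁ × H₂)) ∈ A.domain := by
    subst hA
    exact fun u => Submodule.mem_inf.mpr ⟨Submodule.mem_sup_left u.2, hTle.1 u.2⟩
  have hAd : Dense (A.domain : Set (WithLp 2 (H₁ × H₂))) :=
    hTd.mono (fun x hx => hDsub ⟨x, hx⟩)
  have hfD : f ∈ A.domain := by
    subst hA
    exact Submodule.mem_inf.mpr
      ⟨Submodule.mem_sup_right (Submodule.mem_span_singleton_self f), hfd⟩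
  have hAu : ∀ u : (prodOp B₁ B₂).domain, A ⟨u, hDsub u⟩ = prodOp B₁ B₂ u := by
    subst hA
    intro u
    have h1 : ((prodOp B₁ B₂).adjoint.domRestrict
          (prodDomain B₁ B₂ ⊔ Submodule.span ℂ {f})) ⟨↑u, hDsub u⟩
        = (prodOp B₁ B₂).adjoint ⟨↑u, hTle.1 u.2⟩ := LinearPMap.domRestrict_apply rfl
    rw [h1]
    exact (hTle.2 rfl).symm
  have hAf : A ⟨f, hfD⟩ = Fv := by
    subst hA
    have h1 : ((prodOp B₁ B₂).adjoint.domRestrict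
          (prodDomain B₁ B₂ ⊔ Submodule.span ℂ {f})) ⟨f, hfD⟩
        = (prodOp B₁ B₂).adjoint ⟨f, hfd⟩ := LinearPMap.domRestrict_apply rfl
    rw [h1, hfv]
  have hdec : ∀ x : A.domain, ∃ (u : (prodOp B₁ B₂).domain) (c : ℂ),
      (x : WithLp 2 (H₁ × H₂)) = u + c • f ∧ A x = prodOp B₁ B₂ u + c • Fv := by
    subst hA
    intro x
    obtain ⟨hx1, hx2⟩ := Submodule.mem_inf.mp x.2
    obtain ⟨u, hu, v, hv, huv⟩ := Submodule.mem_sup.mp hx1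
    obtain ⟨c, rfl⟩ := Submodule.mem_span_singleton.mp hv
    refine ⟨⟨u, hu⟩, c, huv.symm, ?_⟩
    have hsplit : (⟨(x : WithLp 2 (H₁ × H₂)), hx2⟩ : (prodOp B₁ B₂).adjoint.domain)
        = ⟨u, hTle.1 hu⟩ + c • ⟨f, hfd⟩ := by
      ext; exact huv.symm
    have hval : ((prodOp B₁ B₂).adjoint.domRestrict
          (prodDomain B₁ B₂ ⊔ Submodule.span ℂ {f})) x
        = (prodOp B₁ B₂).adjoint ⟨(x : WithLp 2 (H₁ × H₂)), hx2⟩ :=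
      LinearPMap.domRestrict_apply rfl
    rw [hval, hsplit, LinearPMap.map_add, LinearPMap.map_smul, hfv]
    congr 1
    exact (hTle.2 rfl).symm
  -- boundary-form bridge facts
  have hb1 : ∀ (u v : (prodOp B₁ B₂).domain),
      ⟪prodOp B₁ B₂ v, (u : WithLp 2 (H₁ × H₂))⟫
        = ⟪(v : WithLp 2 (H₁ × H₂)), prodOp B₁ B₂ u⟫ := fun u v => hTfa v u
  have hb3 : ∀ u : (prodOp B₁ B₂).domain,
      ⟪f, prodOp B₁ B₂ u⟫ = ⟪Fv, (u : WithLp 2 (H₁ × H₂))⟫ := by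
    intro u
    have h := LinearPMap.adjoint_isFormalAdjoint hTd ⟨f, hfd⟩ u
    rw [hfv] at h
    exact h.symm
  have hb2 : ∀ v : (prodOp B₁ B₂).domain,
      ⟪(v : WithLp 2 (H₁ × H₂)), Fv⟫ = ⟪prodOp B₁ B₂ v, f⟫ := by
    intro v
    calc ⟪(v : WithLp 2 (H₁ × H₂)), Fv⟫ = (starRingEnd ℂ) ⟪Fv, (v : WithLp 2 (H₁ × H₂))⟫ :=
          (inner_conj_symm _ _).symm
      _ = (starRingEnd ℂ) ⟪f, prodOp B₁ B₂ v⟫ := by rw [hb3 v]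
      _ = ⟪prodOp B₁ B₂ v, f⟫ := inner_conj_symm _ _
  -- inner products with fp, fm
  have hinnerfp : ∀ (a b : ℂ) (g : WithLp 2 (H₁ × H₂)), g.fst = a • gp₁ → g.snd = b • gp₂ →
      ⟪g, fp⟫ = (starRingEnd ℂ) a * (Real.sin α : ℂ) + (starRingEnd ℂ) b * (Real.cos α : ℂ) := by
    intro a b g h1 h2
    rw [prod_inner_apply', h1, h2, hfp1, hfp2, inner_smul_left, inner_smul_left,
      inner_smul_right, inner_smul_right, hip1, hip2]
    ring
  have hinnerfm : ∀ (a b : ℂ) (g : WithLp 2 (H₁ × H₂)), g.fst = a • gm₁ → g.snd = b • gm₂ →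
      ⟪g, fm⟫ = (starRingEnd ℂ) a * (Real.sin β : ℂ) + (starRingEnd ℂ) b * (Real.cos β : ℂ) := by
    intro a b g h1 h2
    rw [prod_inner_apply', h1, h2, hfm1, hfm2, inner_smul_left, inner_smul_left,
      inner_smul_right, inner_smul_right, hipm1, hipm2]
    ring
  have hfpu : ⟪fp, fp⟫ = 1 := by
    rw [hinnerfp _ _ fp hfp1 hfp2, Complex.conj_ofReal, Complex.conj_ofReal]
    linear_combination hpyα
  have hfmu : ⟪fm, fm⟫ = 1 := by
    rw [hinnerfm _ _ fm hfm1 hfm2, Complex.conj_ofReal, Complex.conj_ofReal]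
    linear_combination hpyβ
  have hb4 : ⟪f, Fv⟫ = ⟪Fv, f⟫ := by
    have hsc : ⟪fm, fp⟫ = (starRingEnd ℂ) ⟪fp, fm⟫ := (inner_conj_symm _ _).symm
    rw [hffpm, hFv]
    simp only [inner_sub_left, inner_sub_right, inner_add_left, inner_add_right,
      inner_smul_left, inner_smul_right, Complex.conj_I, hfpu, hfmu, hsc]
    ring
  -- A is symmetric
  have hsym : IsSymmetricOp A := by
    intro x y
    obtain ⟨u, c, hxu, hxv⟩ := hdec x
    obtain ⟨v, d, hyu, hyv⟩ := hdec y
    unfold ip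
    rw [hxv, hyv, hxu, hyu]
    simp only [inner_add_left, inner_add_right, inner_smul_left, inner_smul_right]
    rw [hb1 u v, ← hb2 v, hb3 u, hb4]
    try ring
  -- characterization of the deficiency elements of A
  have hdefA : ∀ (z : ℂ) (g : WithLp 2 (H₁ × H₂)),
      g ∈ defSet A z ↔ (g ∈ defSet (prodOp B₁ B₂) z ∧ ⟪z • g, f⟫ = ⟪g, Fv⟫) := by
    intro z g
    rw [mem_defSet_iff hAd z g, mem_defSet_iff hTd z g]
    constructor
    · intro h
      refine ⟨fun u => ?_, ?_⟩
      · have h' := h ⟨u, hDsub u⟩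
        rwa [hAu u] at h'
      · have h' := h ⟨f, hfD⟩
        rwa [hAf] at h'
    · rintro ⟨h1, h2⟩ x
      obtain ⟨u, c, hxu, hxv⟩ := hdec x
      rw [hxv, hxu, inner_add_right, inner_add_right, inner_smul_right, inner_smul_right,
        h1 u, h2]
  -- the conditions at f
  have hci : ∀ g : WithLp 2 (H₁ × H₂), (⟪Complex.I • g, f⟫ = ⟪g, Fv⟫ ↔ ⟪g, fp⟫ = 0) := by
    intro g
    rw [hffpm, hFv, inner_smul_left, inner_sub_right, inner_add_right, inner_smul_right,
      inner_smul_right, Complex.conj_I]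
    constructor
    · intro h
      linear_combination (Complex.I / 2) * h + (@inner ℂ _ _ g fp) * Complex.I_sq
    · intro h
      rw [h]
      ring
  have hcim : ∀ g : WithLp 2 (H₁ × H₂), (⟪(-Complex.I) • g, f⟫ = ⟪g, Fv⟫ ↔ ⟪g, fm⟫ = 0) := by
    intro g
    rw [hffpm, hFv, inner_smul_left, inner_sub_right, inner_add_right, inner_smul_right,
      inner_smul_right, map_neg, Complex.conj_I, neg_neg]
    constructor
    · intro h
      linear_combination (Complex.I / 2) * h + (@inner ℂ _ _ g fm) * Complex.I_sq
    · intro h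
      rw [h]
      ring
  -- the deficiency subspaces of A
  have hdefI : defSet A Complex.I = {h | ∃ c : ℂ, h = c • Gp} := by
    ext g
    rw [Set.mem_setOf_eq, hdefA Complex.I g, mem_defSet_prod hd₁ hd₂]
    constructor
    · rintro ⟨⟨hg1, hg2⟩, hcond⟩
      rw [hS₁] at hg1
      rw [hS₂] at hg2
      obtain ⟨a, ha⟩ := hg1
      obtain ⟨b, hb⟩ := hg2
      have h0 : ⟪g, fp⟫ = 0 := (hci g).mp hcond
      rw [hinnerfp a b g ha hb] at h0
      have hab : a * (Real.sin α : ℂ) + b * (Real.cos α : ℂ) = 0 := by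
        have hcc := congrArg (starRingEnd ℂ) h0
        simpa only [map_add, map_mul, map_zero, Complex.conj_conj, Complex.conj_ofReal] using hcc
      refine ⟨a * (Real.cos α : ℂ) - b * (Real.sin α : ℂ), ?_⟩
      have e1 : g.fst = ((a * (Real.cos α : ℂ) - b * (Real.sin α : ℂ)) • Gp).fst := by
        rw [WithLp.smul_fst, hGp1, ha, smul_smul]
        congr 1
        linear_combination (Real.sin α : ℂ) * hab - a * hpyα
      have e2 : g.snd = ((a * (Real.cos α : ℂ) - b * (Real.sin α : ℂ)) • Gp).snd := by
        rw [WithLp.smul_snd, hGp2, hb, smul_smul]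
        congr 1
        linear_combination (Real.cos α : ℂ) * hab - b * hpyα
      exact (WithLp.equiv 2 (H₁ × H₂)).injective (Prod.ext e1 e2)
    · rintro ⟨c, rfl⟩
      refine ⟨⟨?_, ?_⟩, ?_⟩
      · rw [hS₁]
        exact ⟨c * (Real.cos α : ℂ), by rw [WithLp.smul_fst, hGp1, smul_smul]⟩
      · rw [hS₂]
        exact ⟨c * (-(Real.sin α : ℂ)), by rw [WithLp.smul_snd, hGp2, smul_smul]⟩
      · refine (hci _).mpr ?_
        rw [inner_smul_left, hinnerfp ((Real.cos α : ℂ)) (-(Real.sin α : ℂ)) Gp hGp1 hGp2]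
        simp only [map_neg, Complex.conj_ofReal]
        ring
  have hdefmI : defSet A (-Complex.I) = {h | ∃ c : ℂ, h = c • Gm} := by
    ext g
    rw [Set.mem_setOf_eq, hdefA (-Complex.I) g, mem_defSet_prod hd₁ hd₂]
    constructor
    · rintro ⟨⟨hg1, hg2⟩, hcond⟩
      rw [hS₁'] at hg1
      rw [hS₂'] at hg2
      obtain ⟨a, ha⟩ := hg1
      obtain ⟨b, hb⟩ := hg2
      have h0 : ⟪g, fm⟫ = 0 := (hcim g).mp hcond
      rw [hinnerfm a b g ha hb] at h0
      have hab : a * (Real.sin β : ℂ) + b * (Real.cos β : ℂ) = 0 := by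
        have hcc := congrArg (starRingEnd ℂ) h0
        simpa only [map_add, map_mul, map_zero, Complex.conj_conj, Complex.conj_ofReal] using hcc
      refine ⟨a * (Real.cos β : ℂ) - b * (Real.sin β : ℂ), ?_⟩
      have e1 : g.fst = ((a * (Real.cos β : ℂ) - b * (Real.sin β : ℂ)) • Gm).fst := by
        rw [WithLp.smul_fst, hGm1, ha, smul_smul]
        congr 1
        linear_combination (Real.sin β : ℂ) * hab - a * hpyβ
      have e2 : g.snd = ((a * (Real.cos β : ℂ) - b * (Real.sin β : ℂ)) • Gm).snd := by
        rw [WithLp.smul_snd, hGm2, hb, smul_smul]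
        congr 1
        linear_combination (Real.cos β : ℂ) * hab - b * hpyβ
      exact (WithLp.equiv 2 (H₁ × H₂)).injective (Prod.ext e1 e2)
    · rintro ⟨c, rfl⟩
      refine ⟨⟨?_, ?_⟩, ?_⟩
      · rw [hS₁']
        exact ⟨c * (Real.cos β : ℂ), by rw [WithLp.smul_fst, hGm1, smul_smul]⟩
      · rw [hS₂']
        exact ⟨c * (-(Real.sin β : ℂ)), by rw [WithLp.smul_snd, hGm2, smul_smul]⟩
      · refine (hcim _).mpr ?_
        rw [inner_smul_left, hinnerfm ((Real.cos β : ℂ)) (-(Real.sin β : ℂ)) Gm hGm1 hGm2]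
        simp only [map_neg, Complex.conj_ofReal]
        ring
  -- norms
  have hGpn : ‖Gp‖ = 1 := by
    have h2 : ‖Gp‖ ^ 2 = 1 := by
      rw [WithLp.prod_norm_sq_eq_of_L2, hGp1, hGp2, norm_smul, norm_smul, hnp₁, hnp₂,
        mul_one, mul_one, norm_neg, Complex.norm_real, Complex.norm_real]
      simp only [Real.norm_eq_abs, _root_.sq_abs]
      linear_combination Real.sin_sq_add_cos_sq α
    have h3 := Real.sqrt_sq (norm_nonneg Gp)
    rw [h2, Real.sqrt_one] at h3
    exact h3.symm
  have hGmn : ‖Gm‖ = 1 := by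
    have h2 : ‖Gm‖ ^ 2 = 1 := by
      rw [WithLp.prod_norm_sq_eq_of_L2, hGm1, hGm2, norm_smul, norm_smul, hnm₁, hnm₂,
        mul_one, mul_one, norm_neg, Complex.norm_real, Complex.norm_real]
      simp only [Real.norm_eq_abs, _root_.sq_abs]
      linear_combination Real.sin_sq_add_cos_sq β
    have h3 := Real.sqrt_sq (norm_nonneg Gm)
    rw [h2, Real.sqrt_one] at h3
    exact h3.symm
  have hGp0 : Gp ≠ 0 := fun h => by rw [h, norm_zero] at hGpn; exact zero_ne_one hGpn
  have hGm0 : Gm ≠ 0 := fun h => by rw [h, norm_zero] at hGmn; exact zero_ne_one hGmn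
  exact ⟨hsym, ⟨⟨Gp, hGp0, hdefI⟩, ⟨Gm, hGm0, hdefmI⟩⟩, hdefI, hdefmI, hGpn, hGmn⟩

end Main
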